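/- If f and g are elements of Diff^2(I, ∂I) satisfying g∘f∘g^{-1} = f^{-1}, then f is the identity; that is, no nontrivial element of Diff^2(I, ∂I) is conjugate to its own inverse. -/

import Mathlib

open Set

namespace Stmt

lemma negOne_mem_I : (-1 : ℝ) ∈ Set.Icc (-1 : ℝ) 1 := by norm_num
lemma one_mem_I : (1 : ℝ) ∈ Set.Icc (-1 : ℝ) 1 := by norm_num

/-- Membership in `Diff²(I, ∂I)`: a homeomorphism `f` of `I = [-1,1]` onto itself fixing the
endpoints `-1` and `1` such that both `f` and `f⁻¹` are `C²` on `I` (one-sidedly at the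
endpoints). -/
def IsDiff2 (f : Equiv.Perm (Set.Icc (-1 : ℝ) 1)) : Prop :=
  Continuous f ∧ Continuous f.symm ∧
  f ⟨-1, negOne_mem_I⟩ = ⟨-1, negOne_mem_I⟩ ∧ f ⟨1, one_mem_I⟩ = ⟨1, one_mem_I⟩ ∧
  (∃ F : ℝ → ℝ, ContDiffOn ℝ 2 F (Set.Icc (-1 : ℝ) 1) ∧
    ∀ t : (Set.Icc (-1 : ℝ) 1), F t = ((f t : ℝ))) ∧
  (∃ G : ℝ → ℝ, ContDiffOn ℝ 2 G (Set.Icc (-1 : ℝ) 1) ∧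
    ∀ t : (Set.Icc (-1 : ℝ) 1), G t = ((f.symm t : ℝ)))

end Stmt


namespace Kopell

open Set Filter Topology

noncomputable section

def S : Set ℝ := Set.Icc (-1) 1

lemma hSuniq : UniqueDiffOn ℝ S := uniqueDiffOn_Icc (by norm_num)

lemma mem_nhds_of_Ioo {x : ℝ} (hx : x ∈ Ioo (-1:ℝ) 1) : S ∈ 𝓝 x :=
  Icc_mem_nhds hx.1 hx.2

lemma hasDerivAt_of_mem (F : ℝ → ℝ) (hF : ContDiffOn ℝ 2 F S) {x : ℝ}
    (hx : x ∈ Ioo (-1:ℝ) 1) : HasDerivAt F (derivWithin F S x) x := by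
  have h1 : DifferentiableWithinAt ℝ F S x :=
    (hF.differentiableOn (by norm_num)) x (Ioo_subset_Icc_self hx)
  have h2 : DifferentiableAt ℝ F x := h1.differentiableAt (mem_nhds_of_Ioo hx)
  rw [derivWithin_of_mem_nhds (mem_nhds_of_Ioo hx)]
  exact h2.hasDerivAt

lemma key2 (F G : ℝ → ℝ) (a b : ℝ)
    (hFC : ContDiffOn ℝ 2 F S) (hGC : ContDiffOn ℝ 2 G S)
    (hFm : MapsTo F S S) (hGm : MapsTo G S S)
    (hFmono : StrictMonoOn F S) (hGmono : StrictMonoOn G S)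
    (hFpos : ∀ x ∈ S, 0 < derivWithin F S x) (hGpos : ∀ x ∈ S, 0 < derivWithin G S x)
    (hcomm : ∀ x ∈ S, G (G (F x)) = F (G (G x)))
    (htrans : ∀ x ∈ S, F x = x → F (G x) = G x)
    (ha : a ∈ S) (hb : b ∈ S) (hab : a < b)
    (hFa : F a = a) (hFb : F b = b)
    (hgt : ∀ x ∈ Ioo a b, x < F x)
    (hup : b ≤ G a) : False := by
  set F' := derivWithin F S with hF'def
  set G' := derivWithin G S with hG'def
  set A : ℕ → ℝ := fun n => G^[n] a with hAdef
  set B : ℕ → ℝ := fun n => G^[n] b with hBdef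
  have hGmS : ∀ n, MapsTo G^[n] S S := hGm.iterate
  have hAmem : ∀ n, A n ∈ S := fun n => hGmS n ha
  have hBmem : ∀ n, B n ∈ S := fun n => hGmS n hb
  -- iterates of G are strictly monotone on S
  have hGitmono : ∀ n, StrictMonoOn (G^[n]) S := by
    intro n
    induction n with
    | zero => simpa using strictMonoOn_id
    | succ n ih =>
      intro x hx y hy hxy
      rw [Function.iterate_succ_apply', Function.iterate_succ_apply']
      exact hGmono (hGmS n hx) (hGmS n hy) (ih hx hy hxy)
  have hAB : ∀ n, A n < B n := fun n => hGitmono n ha hb hab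
  have hBA : ∀ n, B n ≤ A (n + 1) := by
    intro n
    have h1 : G^[n] b ≤ G^[n] (G a) :=
      (hGitmono n).monotoneOn hb (hGm ha) hup
    simpa [hAdef, hBdef, Function.iterate_succ_apply] using h1
  have hAmono : Monotone A := monotone_nat_of_le_succ (fun n => (hAB n).le.trans (hBA n))
  set p : ℝ := ⨆ n, A n with hpdef
  have hp : Tendsto A atTop (𝓝 p) :=
    tendsto_atTop_ciSup hAmono ⟨1, by rintro _ ⟨n, rfl⟩; exact (hAmem n).2⟩
  have hpS : p ∈ S := isClosed_Icc.mem_of_tendsto hp (Eventually.of_forall hAmem)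
  have hBp : Tendsto B atTop (𝓝 p) := by
    refine tendsto_of_tendsto_of_tendsto_of_le_of_le hp
      (hp.comp (tendsto_add_atTop_nat 1)) (fun n => (hAB n).le) (fun n => hBA n)
  -- fixed points
  have hfixA : ∀ n, F (A n) = A n := by
    intro n
    induction n with
    | zero => simpa [hAdef] using hFa
    | succ n ih =>
      have := htrans (A n) (hAmem n) ih
      simpa [hAdef, Function.iterate_succ_apply'] using this
  have hfixB : ∀ n, F (B n) = B n := by
    intro n
    induction n with
    | zero => simpa [hBdef] using hFb
    | succ n ih =>
      have := htrans (B n) (hBmem n) ih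
      simpa [hBdef, Function.iterate_succ_apply'] using this
  have hFcont : ContinuousOn F S := hFC.continuousOn
  have hFp : F p = p := by
    have h0 : Tendsto A atTop (𝓝[S] p) :=
      tendsto_nhdsWithin_iff.mpr ⟨hp, Eventually.of_forall hAmem⟩
    have h1 : Tendsto (fun n => F (A n)) atTop (𝓝 (F p)) :=
      (hFcont.continuousWithinAt hpS).tendsto.comp h0
    have h2 : Tendsto (fun n => F (A n)) atTop (𝓝 p) := by
      simpa [hfixA] using hp
    exact tendsto_nhds_unique h1 h2
  have hF'cont : ContinuousOn F' S := hFC.continuousOn_derivWithin hSuniq (by norm_num)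
  have hG'cont : ContinuousOn G' S := hGC.continuousOn_derivWithin hSuniq (by norm_num)

  have hIccS : ∀ n, Icc (A n) (B n) ⊆ S := fun n =>
    Icc_subset_Icc (hAmem n).1 (hBmem n).2
  have hIooI : ∀ n, Ioo (A n) (B n) ⊆ Ioo (-1:ℝ) 1 := fun n =>
    Ioo_subset_Ioo (hAmem n).1 (hBmem n).2
  -- F' p = 1
  have hF'p : F' p = 1 := by
    have hxi : ∀ n, ∃ ξ ∈ Ioo (A n) (B n), F' ξ = 1 := by
      intro n
      obtain ⟨ξ, hξ, hslope⟩ := exists_hasDerivAt_eq_slope F F' (hAB n)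
        (hFcont.mono ((hIccS n)))
        (fun x hx => hF'def ▸ hasDerivAt_of_mem F hFC (hIooI n hx))
      refine ⟨ξ, hξ, ?_⟩
      rw [hslope, hfixA, hfixB, div_self (sub_ne_zero.mpr (hAB n).ne')]
    choose ξ hξmem hξ1 using hxi
    have hξp : Tendsto ξ atTop (𝓝 p) :=
      tendsto_of_tendsto_of_tendsto_of_le_of_le hp hBp
        (fun n => (hξmem n).1.le) (fun n => (hξmem n).2.le)
    have hξS : ∀ n, ξ n ∈ S := fun n => (hIccS n) (Ioo_subset_Icc_self (hξmem n))
    have h1 : Tendsto (fun n => F' (ξ n)) atTop (𝓝 (F' p)) :=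
      (hF'cont.continuousWithinAt hpS).tendsto.comp
        (tendsto_nhdsWithin_iff.mpr ⟨hξp, Eventually.of_forall hξS⟩)
    have h2 : Tendsto (fun n => F' (ξ n)) atTop (𝓝 1) := by
      simpa [hξ1] using (tendsto_const_nhds : Tendsto (fun _ : ℕ => (1:ℝ)) atTop _)
    exact tendsto_nhds_unique h1 h2
  -- derivative of iterates of F
  set D : ℕ → ℝ → ℝ := fun k u => ∏ j ∈ Finset.range k, F' (F^[j] u) with hDdef
  set W : ℕ → ℝ → ℝ := fun n u => ∏ j ∈ Finset.range n, G' (G^[j] u) with hWdef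
  have hFinv : ∀ n, MapsTo F (Ioo (A n) (B n)) (Ioo (A n) (B n)) := by
    intro n x hx
    have hxS : x ∈ S := hIccS n (Ioo_subset_Icc_self hx)
    constructor
    · have := hFmono (hAmem n) hxS hx.1; rwa [hfixA] at this
    · have := hFmono hxS (hBmem n) hx.2; rwa [hfixB] at this
  have hDD : ∀ n, ∀ u ∈ Ioo (A n) (B n), ∀ k, HasDerivAt F^[k] (D k u) u := by
    intro n u hu k
    induction k with
    | zero => simpa [hDdef] using (hasDerivAt_id u)
    | succ k ih =>
      have hmem : F^[k] u ∈ Ioo (A n) (B n) := (hFinv n).iterate k hu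
      have h1 : HasDerivAt F (F' (F^[k] u)) (F^[k] u) :=
        hF'def ▸ hasDerivAt_of_mem F hFC (hIooI n hmem)
      have h2 := h1.comp u ih
      rw [← Function.iterate_succ'] at h2
      exact h2.congr_deriv (by simp [hDdef, Finset.prod_range_succ, mul_comm])
  have hIooS0 : Ioo a b ⊆ S := by
    have : Icc a b ⊆ S := Icc_subset_Icc ha.1 hb.2
    exact fun x hx => this (Ioo_subset_Icc_self hx)
  have hGIoo : ∀ j, ∀ u ∈ Ioo a b, G^[j] u ∈ Ioo (A j) (B j) := by
    intro j u hu
    constructor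
    · simpa [hAdef] using hGitmono j ha (hIooS0 hu) hu.1
    · simpa [hBdef] using hGitmono j (hIooS0 hu) hb hu.2
  have hWD : ∀ n, ∀ u ∈ Ioo a b, HasDerivAt G^[n] (W n u) u := by
    intro n u hu
    induction n with
    | zero => simpa [hWdef] using (hasDerivAt_id u)
    | succ n ih =>
      have hmem : G^[n] u ∈ Ioo (A n) (B n) := hGIoo n u hu
      have h1 : HasDerivAt G (G' (G^[n] u)) (G^[n] u) :=
        hG'def ▸ hasDerivAt_of_mem G hGC (hIooI n hmem)
      have h2 := h1.comp u ih
      rw [← Function.iterate_succ'] at h2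
      exact h2.congr_deriv (by simp [hWdef, Finset.prod_range_succ, mul_comm])

  have hG'p : ∀ x ∈ S, 0 < G' x := fun x hx => by rw [hG'def]; exact hGpos x hx
  have hF'pos : ∀ x ∈ S, 0 < F' x := fun x hx => by rw [hF'def]; exact hFpos x hx
  have hIccabS : Icc a b ⊆ S := Icc_subset_Icc ha.1 hb.2
  have hLex : ∃ L : ℝ, 0 ≤ L ∧ ∀ n, ∀ u ∈ Icc a b, ∀ v ∈ Icc a b,
      W n u ≤ Real.exp (2 * L) * W n v := by
    have hScompact : IsCompact S := isCompact_Icc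
    -- minimum of G'
    obtain ⟨z, hzS, hzmin⟩ := hScompact.exists_isMinOn ⟨a, ha⟩ hG'cont
    set m : ℝ := G' z with hmdef
    have hm : 0 < m := by rw [hmdef, hG'def]; exact hGpos z hzS
    have hmle : ∀ x ∈ S, m ≤ G' x := fun x hx => hzmin hx
    -- bound on second derivative
    have hG'C1 : ContDiffOn ℝ 1 G' S := hG'def ▸ hGC.derivWithin hSuniq (by norm_num)
    obtain ⟨K, hK⟩ := hScompact.exists_bound_of_continuousOn
      (hG'C1.continuousOn_derivWithin hSuniq (by norm_num))
    have hK0 : 0 ≤ K := le_trans (norm_nonneg _) (hK a ha)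
    have hLip : ∀ u ∈ S, ∀ v ∈ S, |G' u - G' v| ≤ K * |u - v| := by
      intro u hu v hv
      have := Convex.norm_image_sub_le_of_norm_derivWithin_le
        (hG'C1.differentiableOn one_ne_zero) hK (convex_Icc _ _) hv hu
      simpa [Real.norm_eq_abs] using this
    set L : ℝ := K / m with hLdef
    have hL0 : 0 ≤ L := div_nonneg hK0 hm.le
    refine ⟨L, hL0, ?_⟩
    have hG'p : ∀ x ∈ S, 0 < G' x := fun x hx => hG'def ▸ hGpos x hx
    have hlog : ∀ u ∈ S, ∀ v ∈ S, Real.log (G' u) - Real.log (G' v) ≤ L * |u - v| := by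
      intro u hu v hv
      rw [← Real.log_div (hG'p u hu).ne' (hG'p v hv).ne']
      calc Real.log (G' u / G' v) ≤ G' u / G' v - 1 :=
            Real.log_le_sub_one_of_pos (div_pos (hG'p u hu) (hG'p v hv))
        _ = (G' u - G' v) / G' v := by
            rw [sub_div, div_self (hG'p v hv).ne']
        _ ≤ |G' u - G' v| / m :=
            div_le_div₀ (abs_nonneg _) (le_abs_self _) hm (hmle v hv)
        _ ≤ (K * |u - v|) / m := by gcongr; exact hLip u hu v hv
        _ = L * |u - v| := by rw [hLdef]; ring
    -- membership of iterates in [A j, B j]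
    have hmemj : ∀ j, ∀ x ∈ Icc a b, G^[j] x ∈ Icc (A j) (B j) := by
      intro j x hx
      have hxS : x ∈ S := Icc_subset_Icc ha.1 hb.2 hx
      constructor
      · simpa [hAdef] using (hGitmono j).monotoneOn ha hxS hx.1
      · simpa [hBdef] using (hGitmono j).monotoneOn hxS hb hx.2
    have hjS : ∀ j, ∀ x ∈ Icc a b, G^[j] x ∈ S := fun j x hx =>
      Icc_subset_Icc (hAmem j).1 (hBmem j).2 (hmemj j x hx)
    -- sum of lengths bound
    have hsum : ∀ n, ∀ u ∈ Icc a b, ∀ v ∈ Icc a b,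
        ∑ j ∈ Finset.range n, |G^[j] u - G^[j] v| ≤ 2 := by
      intro n u hu v hv
      have h1 : ∀ j ∈ Finset.range n, |G^[j] u - G^[j] v| ≤ A (j+1) - A j := by
        intro j _
        have h2 := hmemj j u hu
        have h3 := hmemj j v hv
        have h4 := hBA j
        rw [abs_le]
        constructor <;> nlinarith [h2.1, h2.2, h3.1, h3.2]
      calc ∑ j ∈ Finset.range n, |G^[j] u - G^[j] v|
          ≤ ∑ j ∈ Finset.range n, (A (j+1) - A j) := Finset.sum_le_sum h1
        _ = A n - A 0 := Finset.sum_range_sub A n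
        _ ≤ 2 := by have h5 := (hAmem n).2; have h6 := (hAmem 0).1; linarith
    -- the distortion bound
    intro n u hu v hv
    have hWpos : ∀ x ∈ Icc a b, 0 < W n x := by
      intro x hx
      rw [hWdef]
      exact Finset.prod_pos (fun j _ => hG'p _ (hjS j x hx))
    have hlogW : Real.log (W n u) - Real.log (W n v) ≤ 2 * L := by
      rw [hWdef]
      rw [Real.log_prod (fun j _ => (hG'p _ (hjS j u hu)).ne'),
          Real.log_prod (fun j _ => (hG'p _ (hjS j v hv)).ne'),
          ← Finset.sum_sub_distrib]
      calc ∑ j ∈ Finset.range n, (Real.log (G' (G^[j] u)) - Real.log (G' (G^[j] v)))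
          ≤ ∑ j ∈ Finset.range n, L * |G^[j] u - G^[j] v| :=
            Finset.sum_le_sum (fun j _ => hlog _ (hjS j u hu) _ (hjS j v hv))
        _ = L * ∑ j ∈ Finset.range n, |G^[j] u - G^[j] v| := by
            rw [Finset.mul_sum]
        _ ≤ L * 2 := by
            have := hsum n u hu v hv
            exact mul_le_mul_of_nonneg_left this hL0
        _ = 2 * L := by ring
    have h7 : W n u = Real.exp (Real.log (W n u)) := (Real.exp_log (hWpos u hu)).symm
    rw [h7]
    calc Real.exp (Real.log (W n u)) ≤ Real.exp (2 * L + Real.log (W n v)) := by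
          apply Real.exp_le_exp.mpr; linarith
      _ = Real.exp (2 * L) * W n v := by rw [Real.exp_add, Real.exp_log (hWpos v hv)]

  obtain ⟨L, hL0, hdist⟩ := hLex
  have hWpos : ∀ n, ∀ u ∈ Icc a b, 0 < W n u := by
    intro n u hu
    rw [hWdef]
    exact Finset.prod_pos (fun j _ => hG'p _ (hGmS j (hIccabS hu)))

  have hA0 : A 0 = a := by simp [hAdef]
  have hB0 : B 0 = b := by simp [hBdef]
  have hIoo0 : ∀ u ∈ Ioo a b, u ∈ Ioo (A 0) (B 0) := by
    intro u hu; rwa [hA0, hB0]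
  have hFIoo : MapsTo F (Ioo a b) (Ioo a b) := by
    intro u hu
    have := hFinv 0 (hIoo0 u hu)
    rwa [hA0, hB0] at this
  have hGmS : ∀ n, MapsTo G^[n] S S := hGm.iterate
  -- commutation of F with even iterates of G on S
  have hC2 : ∀ n, ∀ x ∈ S, G^[2*n] (F x) = F (G^[2*n] x) := by
    intro n
    induction n with
    | zero => intro x _; simp
    | succ n ih =>
      intro x hx
      have e1 : 2 * (n+1) = 2*n + 2 := by ring
      rw [e1, Function.iterate_add_apply, Function.iterate_add_apply]
      have e2 : G^[2] (F x) = F (G^[2] x) := by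
        simpa [Function.iterate_succ_apply'] using hcomm x hx
      rw [e2]
      exact ih _ (hGmS 2 hx)
  have hCk : ∀ n k, ∀ x ∈ S, G^[2*n] (F^[k] x) = F^[k] (G^[2*n] x) := by
    intro n k
    induction k with
    | zero => intro x _; simp
    | succ k ih =>
      intro x hx
      rw [Function.iterate_succ_apply', Function.iterate_succ_apply',
        hC2 n _ (hFm.iterate k hx), ih x hx]
  -- the key derivative identity
  have eq1 : ∀ k n, ∀ x ∈ Ioo a b,
      D k (G^[2*n] x) * W (2*n) x = W (2*n) (F^[k] x) * D k x := by
    intro k n x hx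
    have hxS : x ∈ S := hIooS0 hx
    have h1 : HasDerivAt G^[2*n] (W (2*n) x) x := hWD (2*n) x hx
    have h2 : HasDerivAt F^[k] (D k (G^[2*n] x)) (G^[2*n] x) :=
      hDD (2*n) _ (hGIoo (2*n) x hx) k
    have hL1 := h2.comp x h1
    have h3 : HasDerivAt F^[k] (D k x) x := hDD 0 x (hIoo0 x hx) k
    have h4 : HasDerivAt G^[2*n] (W (2*n) (F^[k] x)) (F^[k] x) :=
      hWD (2*n) _ (hFIoo.iterate k hx)
    have hR1 := h4.comp x h3
    have hIb : Ioo a b ⊆ Ioo (-1:ℝ) 1 := Ioo_subset_Ioo ha.1 hb.2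
    have heq : (F^[k] ∘ G^[2*n]) =ᶠ[𝓝 x] (G^[2*n] ∘ F^[k]) := by
      filter_upwards [mem_nhds_of_Ioo (hIb hx)] with y hy
      exact (hCk n k y hy).symm
    have hL2 : HasDerivAt (G^[2*n] ∘ F^[k]) (D k (G^[2*n] x) * W (2*n) x) x :=
      (heq.hasDerivAt_iff).mp hL1
    exact hL2.unique hR1
  -- positivity of D
  have hDpos : ∀ k, ∀ u ∈ Ioo a b, 0 < D k u := by
    intro k u hu
    rw [hDdef]
    exact Finset.prod_pos (fun j _ => hF'pos _ (hIooS0 (hFIoo.iterate j hu)))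
  -- continuity of D k on S and value at p
  have hFitS : ∀ j, ContinuousOn (F^[j]) S := by
    intro j
    induction j with
    | zero => simpa using continuousOn_id
    | succ j ih =>
      rw [Function.iterate_succ']
      exact hFcont.comp ih (hFm.iterate j)
  have hDcont : ∀ k, ContinuousOn (D k) S := by
    intro k
    induction k with
    | zero => simpa [hDdef] using continuousOn_const
    | succ k ih =>
      have h1 : ContinuousOn (fun u => F' (F^[k] u)) S :=
        hF'cont.comp (hFitS k) (hFm.iterate k)
      have h2 := ih.mul h1
      simpa [hDdef, Finset.prod_range_succ, Pi.mul_def] using h2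
  have hDp : ∀ k, D k p = 1 := by
    intro k
    rw [hDdef]
    refine Finset.prod_eq_one (fun j _ => ?_)
    rw [Function.iterate_fixed hFp, hF'p]
  -- limits
  have h2n : Tendsto (fun n : ℕ => 2*n) atTop atTop := by
    apply StrictMono.tendsto_atTop
    intro i j hij; dsimp only; omega
  have hylim : ∀ x ∈ Ioo a b, Tendsto (fun n => G^[2*n] x) atTop (𝓝 p) := by
    intro x hx
    refine tendsto_of_tendsto_of_tendsto_of_le_of_le (hp.comp h2n) (hBp.comp h2n)
      (fun n => (hGIoo (2*n) x hx).1.le) (fun n => (hGIoo (2*n) x hx).2.le)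
  have hDlim : ∀ k, ∀ x ∈ Ioo a b, Tendsto (fun n => D k (G^[2*n] x)) atTop (𝓝 1) := by
    intro k x hx
    have hyS : ∀ n : ℕ, G^[2*n] x ∈ S := fun n =>
      Icc_subset_Icc (hAmem (2*n)).1 (hBmem (2*n)).2
        (Ioo_subset_Icc_self (hGIoo (2*n) x hx))
    have h0 : Tendsto (fun n => G^[2*n] x) atTop (𝓝[S] p) :=
      tendsto_nhdsWithin_iff.mpr ⟨hylim x hx, Eventually.of_forall hyS⟩
    have h1 := ((hDcont k).continuousWithinAt hpS).tendsto.comp h0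
    simpa [Function.comp_def, hDp k] using h1
  -- uniform lower bound for D k on (a,b)
  have hDlb : ∀ k, ∀ x ∈ Ioo a b, (Real.exp (2*L))⁻¹ ≤ D k x := by
    intro k x hx
    have hstep : ∀ n : ℕ, D k (G^[2*n] x) / Real.exp (2*L) ≤ D k x := by
      intro n
      have he := eq1 k n x hx
      have hFkx : F^[k] x ∈ Ioo a b := hFIoo.iterate k hx
      have hd := hdist (2*n) (F^[k] x) (Ioo_subset_Icc_self hFkx)
        x (Ioo_subset_Icc_self hx)
      have hWx : 0 < W (2*n) x := hWpos (2*n) x (Ioo_subset_Icc_self hx)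
      have hDx : 0 < D k x := hDpos k x hx
      -- D k y * W x = W (F^k x) * D k x ≤ exp(2L) * W x * D k x
      have h2 : D k (G^[2*n] x) * W (2*n) x ≤ Real.exp (2*L) * W (2*n) x * D k x := by
        rw [he]
        have := mul_le_mul_of_nonneg_right hd hDx.le
        linarith [this]
      have h3 : D k (G^[2*n] x) ≤ Real.exp (2*L) * D k x := by
        have := (mul_le_mul_iff_of_pos_right hWx).mp (by linarith [h2] : D k (G^[2*n] x) * W (2*n) x ≤ (Real.exp (2*L) * D k x) * W (2*n) x)
        exact this
      rw [div_le_iff₀ (Real.exp_pos _)]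
      linarith [h3]
    have hlim : Tendsto (fun n => D k (G^[2*n] x) / Real.exp (2*L)) atTop
        (𝓝 ((Real.exp (2*L))⁻¹)) := by
      have := (hDlim k x hx).div_const (Real.exp (2*L))
      simpa [one_div] using this
    exact le_of_tendsto hlim (Eventually.of_forall hstep)
  -- final contradiction
  set x : ℝ := (a+b)/2 with hxdef
  have hx : x ∈ Ioo a b := by constructor <;> (rw [hxdef]; linarith)
  have hxF : x < F x := hgt x hx
  set ε : ℝ := (Real.exp (2*L))⁻¹ * (F x - x) with hεdef
  have hε : 0 < ε := mul_pos (inv_pos.mpr (Real.exp_pos _)) (by linarith)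
  have hsub : Icc x (F x) ⊆ Ioo a b := fun y hy =>
    ⟨lt_of_lt_of_le hx.1 hy.1, lt_of_le_of_lt hy.2 (hFIoo hx).2⟩
  have hstep : ∀ k : ℕ, ε ≤ F^[k+1] x - F^[k] x := by
    intro k
    obtain ⟨ξ, hξ, hslope⟩ := exists_hasDerivAt_eq_slope (F^[k]) (D k) hxF
      (fun y hy => ((hDD 0 y (hIoo0 y (hsub hy)) k).continuousAt).continuousWithinAt)
      (fun y hy => hDD 0 y (hIoo0 y (hsub (Ioo_subset_Icc_self hy))) k)
    have hξab : ξ ∈ Ioo a b := hsub (Ioo_subset_Icc_self hξ)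
    have h5 : (Real.exp (2*L))⁻¹ ≤ (F^[k] (F x) - F^[k] x) / (F x - x) := by
      rw [← hslope]; exact hDlb k ξ hξab
    have h6 : (Real.exp (2*L))⁻¹ * (F x - x) ≤ F^[k] (F x) - F^[k] x := by
      have hpos : (0:ℝ) < F x - x := by linarith
      calc (Real.exp (2*L))⁻¹ * (F x - x)
          ≤ ((F^[k] (F x) - F^[k] x)/(F x - x)) * (F x - x) :=
            mul_le_mul_of_nonneg_right h5 hpos.le
        _ = F^[k] (F x) - F^[k] x := div_mul_cancel₀ _ hpos.ne'
    rw [Function.iterate_succ_apply]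
    exact h6
  have hmono : ∀ k : ℕ, x + k * ε ≤ F^[k] x := by
    intro k
    induction k with
    | zero => simp
    | succ k ih =>
      have := hstep k
      push_cast
      push_cast at ih
      linarith
  obtain ⟨k, hk⟩ := exists_nat_gt ((b - x)/ε)
  have h7 : (b - x)/ε * ε < k * ε := by
    exact mul_lt_mul_of_pos_right hk hε
  rw [div_mul_cancel₀ _ hε.ne'] at h7
  have h8 : F^[k] x < b := (hFIoo.iterate k hx).2
  have h9 := hmono k
  linarith
lemma key1 (F G Gi : ℝ → ℝ)
    (hFC : ContDiffOn ℝ 2 F S) (hGC : ContDiffOn ℝ 2 G S) (hGiC : ContDiffOn ℝ 2 Gi S)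
    (hFm : MapsTo F S S) (hGm : MapsTo G S S) (hGim : MapsTo Gi S S)
    (hFmono : StrictMonoOn F S) (hGmono : StrictMonoOn G S) (hGimono : StrictMonoOn Gi S)
    (hFpos : ∀ x ∈ S, 0 < derivWithin F S x) (hGpos : ∀ x ∈ S, 0 < derivWithin G S x)
    (hGipos : ∀ x ∈ S, 0 < derivWithin Gi S x)
    (hGGi : ∀ x ∈ S, G (Gi x) = x) (hGiG : ∀ x ∈ S, Gi (G x) = x)
    (hcommG : ∀ x ∈ S, G (G (F x)) = F (G (G x)))
    (hcommGi : ∀ x ∈ S, Gi (Gi (F x)) = F (Gi (Gi x)))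
    (htransG : ∀ x ∈ S, F x = x → F (G x) = G x)
    (htransGi : ∀ x ∈ S, F x = x → F (Gi x) = Gi x)
    (hconjG : ∀ x ∈ S, x < F x → F (G x) < G x)
    (hF1 : F (-1) = -1) (hF2 : F 1 = 1)
    (x0 : ℝ) (hx0 : x0 ∈ Ioo (-1:ℝ) 1) (hlt : x0 < F x0) : False := by
  have hFcont : ContinuousOn F S := hFC.continuousOn
  have hx0S : x0 ∈ S := Ioo_subset_Icc_self hx0
  set Afix : Set ℝ := {x | x ∈ Icc (-1) x0 ∧ F x = x} with hAfixdef
  set Bfix : Set ℝ := {x | x ∈ Icc x0 1 ∧ F x = x} with hBfixdef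
  have hAne : Afix.Nonempty := ⟨-1, ⟨⟨le_rfl, hx0.1.le⟩, hF1⟩⟩
  have hBne : Bfix.Nonempty := ⟨1, ⟨⟨hx0.2.le, le_rfl⟩, hF2⟩⟩
  have hsubA : Icc (-1:ℝ) x0 ⊆ S := Icc_subset_Icc le_rfl hx0.2.le
  have hsubB : Icc x0 (1:ℝ) ⊆ S := Icc_subset_Icc hx0.1.le le_rfl
  have hAclosed : IsClosed Afix := by
    have h1 : ContinuousOn (fun x => F x - x) (Icc (-1) x0) :=
      (hFcont.mono hsubA).sub continuousOn_id
    have h2 := h1.preimage_isClosed_of_isClosed isClosed_Icc (isClosed_singleton (x := (0:ℝ)))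
    convert h2 using 1
    ext x; simp [hAfixdef, sub_eq_zero, and_comm]
  have hBclosed : IsClosed Bfix := by
    have h1 : ContinuousOn (fun x => F x - x) (Icc x0 1) :=
      (hFcont.mono hsubB).sub continuousOn_id
    have h2 := h1.preimage_isClosed_of_isClosed isClosed_Icc (isClosed_singleton (x := (0:ℝ)))
    convert h2 using 1
    ext x; simp [hBfixdef, sub_eq_zero, and_comm]
  have hAbdd : BddAbove Afix := ⟨x0, fun x hx => hx.1.2⟩
  have hBbdd : BddBelow Bfix := ⟨x0, fun x hx => hx.1.1⟩
  set a := sSup Afix with hadef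
  set b := sInf Bfix with hbdef
  have haA : a ∈ Afix := hAclosed.csSup_mem hAne hAbdd
  have hbB : b ∈ Bfix := hBclosed.csInf_mem hBne hBbdd
  have haS : a ∈ S := hsubA haA.1
  have hbS : b ∈ S := hsubB hbB.1
  have hax0 : a < x0 := by
    rcases lt_or_eq_of_le haA.1.2 with h | h
    · exact h
    · rw [h] at haA; exact absurd haA.2 hlt.ne'
  have hx0b : x0 < b := by
    rcases lt_or_eq_of_le hbB.1.1 with h | h
    · exact h
    · rw [← h] at hbB; exact absurd hbB.2 hlt.ne'
  have hab : a < b := lt_trans hax0 hx0b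
  have hIooabS : Ioo a b ⊆ S := fun y hy =>
    ⟨le_trans haS.1 hy.1.le, le_trans hy.2.le hbS.2⟩
  have hnofix : ∀ y ∈ Ioo a b, F y ≠ y := by
    intro y hy hfy
    rcases le_or_gt y x0 with h | h
    · have hyA : y ∈ Afix := ⟨⟨le_trans haS.1 hy.1.le, h⟩, hfy⟩
      exact absurd (le_csSup hAbdd hyA) (not_le.mpr hy.1)
    · have hyB : y ∈ Bfix := ⟨⟨h.le, le_trans hy.2.le hbS.2⟩, hfy⟩
      exact absurd (csInf_le hBbdd hyB) (not_le.mpr hy.2)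
  have hab3 : ∀ y ∈ Ioo a b, y < F y := by
    intro y hy
    by_contra hc
    push_neg at hc
    have hlt2 : F y < y := lt_of_le_of_ne hc (hnofix y hy)
    rcases lt_or_ge y x0 with h | h
    · have hcont : ContinuousOn (fun x => F x - x) (Icc y x0) :=
        (hFcont.mono (Icc_subset_Icc (hIooabS hy).1 hx0.2.le)).sub continuousOn_id
      have key := intermediate_value_Ioo h.le hcont
      obtain ⟨z, hz, hz0⟩ := key (show (0:ℝ) ∈ Ioo _ _ from ⟨by linarith, by linarith⟩)
      have hzfix : F z = z := by
        have : F z - z = 0 := hz0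
        linarith
      exact hnofix z ⟨lt_trans hy.1 hz.1, lt_trans hz.2 hx0b⟩ hzfix
    · have hcont : ContinuousOn (fun x => F x - x) (Icc x0 y) :=
        (hFcont.mono (Icc_subset_Icc hx0.1.le (hIooabS hy).2)).sub continuousOn_id
      have key := intermediate_value_Ioo' h hcont
      obtain ⟨z, hz, hz0⟩ := key (show (0:ℝ) ∈ Ioo _ _ from ⟨by linarith, by linarith⟩)
      have hzfix : F z = z := by
        have : F z - z = 0 := hz0
        linarith
      exact hnofix z ⟨lt_trans hax0 hz.1, lt_trans hz.2 hy.2⟩ hzfix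
  -- case analysis on position of G a, G b
  have hGaS : G a ∈ S := hGm haS
  have hGbS : G b ∈ S := hGm hbS
  have hGa : F (G a) = G a := htransG a haS haA.2
  have hGb : F (G b) = G b := htransG b hbS hbB.2
  have htri : ∀ c, c ∈ S → F c = c → c ≤ a ∨ b ≤ c := by
    intro c hcS hfc
    by_contra hcon
    push_neg at hcon
    exact hnofix c ⟨hcon.1, hcon.2⟩ hfc
  rcases htri (G a) hGaS hGa with hGa1 | hGa2
  · rcases htri (G b) hGbS hGb with hGb1 | hGb2
    · -- G b ≤ a : use Gi
      have hup : b ≤ Gi a := by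
        calc b = Gi (G b) := (hGiG b hbS).symm
          _ ≤ Gi a := hGimono.monotoneOn hGbS haS hGb1
      exact key2 F Gi a b hFC hGiC hFm hGim hFmono hGimono hFpos hGipos hcommGi
        htransGi haS hbS hab haA.2 hbB.2 hab3 hup
    · -- G a ≤ a and b ≤ G b : contradiction via midpoint
      set y := (a+b)/2 with hydef
      have hy : y ∈ Ioo a b := by constructor <;> (rw [hydef]; linarith)
      have hyS : y ∈ S := hIooabS hy
      set x := Gi y with hxdef
      have hxS : x ∈ S := hGim hyS
      have hx1 : a < x := by
        have h1 : G a < y := lt_of_le_of_lt hGa1 hy.1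
        calc a = Gi (G a) := (hGiG a haS).symm
          _ < Gi y := hGimono hGaS hyS h1
      have hx2 : x < b := by
        have h1 : y < G b := lt_of_lt_of_le hy.2 hGb2
        calc x < Gi (G b) := hGimono hyS hGbS h1
          _ = b := hGiG b hbS
      have h3 : x < F x := hab3 x ⟨hx1, hx2⟩
      have h4 := hconjG x hxS h3
      rw [hxdef, hGGi y hyS] at h4
      exact absurd (hab3 y hy) (not_lt.mpr h4.le)
  · -- b ≤ G a : use G
    exact key2 F G a b hFC hGC hFm hGm hFmono hGmono hFpos hGpos hcommG
      htransG haS hbS hab haA.2 hbB.2 hab3 hGa2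
lemma strictMono_aux (F Fi : ℝ → ℝ) (hFcont : ContinuousOn F S)
    (hinv : ∀ x ∈ S, Fi (F x) = x) (h1 : F (-1) = -1) (h2 : F 1 = 1) :
    StrictMonoOn F S := by
  have hinj : InjOn F S := fun x hx y hy hxy => by
    rw [← hinv x hx, ← hinv y hy, hxy]
  exact ContinuousOn.strictMonoOn_of_injOn_Icc (by norm_num : (-1:ℝ) ≤ 1)
    (by rw [h1, h2]; norm_num) hFcont hinj

lemma pos_aux (F Fi : ℝ → ℝ) (hFC : ContDiffOn ℝ 2 F S) (hFiC : ContDiffOn ℝ 2 Fi S)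
    (hFm : MapsTo F S S) (hinv : ∀ x ∈ S, Fi (F x) = x)
    (h1 : F (-1) = -1) (h2 : F 1 = 1) :
    ∀ x ∈ S, 0 < derivWithin F S x := by
  have hne : ∀ x ∈ S, derivWithin F S x ≠ 0 := by
    intro x hx h0
    have hdF : DifferentiableWithinAt ℝ F S x := (hFC.differentiableOn (by norm_num)) x hx
    have hdFi : DifferentiableWithinAt ℝ Fi S (F x) :=
      (hFiC.differentiableOn (by norm_num)) _ (hFm hx)
    have hcomp := derivWithin_comp x hdFi hdF hFm
    have hid : derivWithin (Fi ∘ F) S x = 1 := by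
      have he : derivWithin (Fi ∘ F) S x = derivWithin id S x :=
        derivWithin_congr (fun y hy => hinv y hy) (hinv x hx)
      rw [he, derivWithin_id x S (hSuniq x hx)]
    rw [hid, h0, mul_zero] at hcomp
    exact one_ne_zero hcomp
  have hF'cont : ContinuousOn (derivWithin F S) S :=
    hFC.continuousOn_derivWithin hSuniq (by norm_num)
  obtain ⟨ξ, hξ, hξ1⟩ : ∃ ξ ∈ Ioo (-1:ℝ) 1, derivWithin F S ξ = 1 := by
    obtain ⟨ξ, hξ, hsl⟩ := exists_hasDerivAt_eq_slope F (derivWithin F S)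
      (by norm_num : (-1:ℝ) < 1) hFC.continuousOn
      (fun y hy => hasDerivAt_of_mem F hFC hy)
    refine ⟨ξ, hξ, ?_⟩
    rw [hsl, h1, h2]; norm_num
  intro x hx
  rcases (hne x hx).lt_or_gt with hneg | hpos
  · exfalso
    have hξS : ξ ∈ S := Ioo_subset_Icc_self hξ
    have hu : uIcc x ξ ⊆ S := uIcc_subset_Icc hx hξS
    have hIVT := intermediate_value_uIcc (hF'cont.mono hu)
    have h0mem : (0:ℝ) ∈ uIcc (derivWithin F S x) (derivWithin F S ξ) := by
      rw [hξ1]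
      exact Set.mem_uIcc.mpr (Or.inl ⟨hneg.le, by norm_num⟩)
    obtain ⟨z, hz, hz0⟩ := hIVT h0mem
    exact hne z (hu hz) hz0
  · exact hpos

lemma conj_aux (F Fi G : ℝ → ℝ) (hFm : MapsTo F S S) (hFim : MapsTo Fi S S)
    (hGm : MapsTo G S S) (hFmono : StrictMonoOn F S) (hGmono : StrictMonoOn G S)
    (hFiF : ∀ x ∈ S, F (Fi x) = x)
    (rel : ∀ x ∈ S, G (F x) = Fi (G x)) :
    ∀ x ∈ S, x < F x → F (G x) < G x := by
  intro x hx hlt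
  have h1 : G x < G (F x) := hGmono hx (hFm hx) hlt
  rw [rel x hx] at h1
  have h2 : F (G x) < F (Fi (G x)) := hFmono (hGm hx) (hFim (hGm hx)) h1
  rwa [hFiF _ (hGm hx)] at h2


end
end Kopell

open Set

/-- (Kopell) If `f, g ∈ Diff²(I, ∂I)` satisfy `g ∘ f ∘ g⁻¹ = f⁻¹`, then `f` is the identity:
no nontrivial element of `Diff²(I, ∂I)` is conjugate to its own inverse. -/
theorem diff2_not_conjugate_to_inverse (f g : Equiv.Perm (Set.Icc (-1 : ℝ) 1))
    (hf : Stmt.IsDiff2 f) (hg : Stmt.IsDiff2 g) (h : g * f * g⁻¹ = f⁻¹) : f = 1 := by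
  classical
  by_contra hne
  obtain ⟨hfc, hfsc, hf_1, hf1, ⟨F, hFC, hFt⟩, ⟨Fi, hFiC, hFit⟩⟩ := hf
  obtain ⟨hgc, hgsc, hg_1, hg1, ⟨G, hGC, hGt⟩, ⟨Gi, hGiC, hGit⟩⟩ := hg
  set S := Kopell.S with hSdef
  have hSeq : S = Set.Icc (-1 : ℝ) 1 := rfl
  -- basic facts for a perm with C² witnesses
  have hFm : MapsTo F S S := fun x hx => by
    rw [hSeq] at hx ⊢; rw [hFt ⟨x, hx⟩]; exact (f ⟨x, hx⟩).2
  have hFim : MapsTo Fi S S := fun x hx => by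
    rw [hSeq] at hx ⊢; rw [hFit ⟨x, hx⟩]; exact (f.symm ⟨x, hx⟩).2
  have hGm : MapsTo G S S := fun x hx => by
    rw [hSeq] at hx ⊢; rw [hGt ⟨x, hx⟩]; exact (g ⟨x, hx⟩).2
  have hGim : MapsTo Gi S S := fun x hx => by
    rw [hSeq] at hx ⊢; rw [hGit ⟨x, hx⟩]; exact (g.symm ⟨x, hx⟩).2
  have hFFi : ∀ x ∈ S, Fi (F x) = x := by
    intro x hx
    rw [hFt ⟨x, hx⟩, hFit (f ⟨x, hx⟩)]
    simp
  have hFiF : ∀ x ∈ S, F (Fi x) = x := by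
    intro x hx
    rw [hFit ⟨x, hx⟩, hFt (f.symm ⟨x, hx⟩)]
    simp
  have hGGi : ∀ x ∈ S, G (Gi x) = x := by
    intro x hx
    rw [hGit ⟨x, hx⟩, hGt (g.symm ⟨x, hx⟩)]
    simp
  have hGiG : ∀ x ∈ S, Gi (G x) = x := by
    intro x hx
    rw [hGt ⟨x, hx⟩, hGit (g ⟨x, hx⟩)]
    simp
  -- endpoints
  have hF1 : F (-1) = -1 := by
    have := hFt ⟨-1, Stmt.negOne_mem_I⟩
    rw [hf_1] at this
    exact this
  have hF2 : F 1 = 1 := by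
    have := hFt ⟨1, Stmt.one_mem_I⟩
    rw [hf1] at this
    exact this
  have hG1 : G (-1) = -1 := by
    have := hGt ⟨-1, Stmt.negOne_mem_I⟩
    rw [hg_1] at this
    exact this
  have hG2 : G 1 = 1 := by
    have := hGt ⟨1, Stmt.one_mem_I⟩
    rw [hg1] at this
    exact this
  have hm1S : (-1:ℝ) ∈ S := Stmt.negOne_mem_I
  have h1S : (1:ℝ) ∈ S := Stmt.one_mem_I
  have hFi1 : Fi (-1) = -1 := by rw [← hF1, hFFi (-1) hm1S, hF1]
  have hFi2 : Fi 1 = 1 := by rw [← hF2, hFFi 1 h1S, hF2]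
  have hGi1 : Gi (-1) = -1 := by rw [← hG1, hGiG (-1) hm1S, hG1]
  have hGi2 : Gi 1 = 1 := by rw [← hG2, hGiG 1 h1S, hG2]
  -- monotonicity and derivative positivity
  have hFmono : StrictMonoOn F S := Kopell.strictMono_aux F Fi hFC.continuousOn hFFi hF1 hF2
  have hFimono : StrictMonoOn Fi S := Kopell.strictMono_aux Fi F hFiC.continuousOn hFiF hFi1 hFi2
  have hGmono : StrictMonoOn G S := Kopell.strictMono_aux G Gi hGC.continuousOn hGiG hG1 hG2
  have hGimono : StrictMonoOn Gi S := Kopell.strictMono_aux Gi G hGiC.continuousOn hGGi hGi1 hGi2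
  have hFpos : ∀ x ∈ S, 0 < derivWithin F S x :=
    Kopell.pos_aux F Fi hFC hFiC hFm hFFi hF1 hF2
  have hFipos : ∀ x ∈ S, 0 < derivWithin Fi S x :=
    Kopell.pos_aux Fi F hFiC hFC hFim hFiF hFi1 hFi2
  have hGpos : ∀ x ∈ S, 0 < derivWithin G S x :=
    Kopell.pos_aux G Gi hGC hGiC hGm hGiG hG1 hG2
  have hGipos : ∀ x ∈ S, 0 < derivWithin Gi S x :=
    Kopell.pos_aux Gi G hGiC hGC hGim hGGi hGi1 hGi2
  -- the conjugation relation, pointwise on S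
  have hgf : g * f = f⁻¹ * g := by
    have := congrArg (fun x => x * g) h
    simpa [mul_assoc] using this
  have l1 : ∀ t : Icc (-1:ℝ) 1, g (f t) = f.symm (g t) := by
    intro t
    have := congrArg (fun e : Equiv.Perm (Icc (-1:ℝ) 1) => e t) hgf
    simpa [Equiv.Perm.mul_apply] using this
  have rel1 : ∀ x ∈ S, G (F x) = Fi (G x) := by
    intro x hx
    rw [hSeq] at hx
    rw [hFt ⟨x, hx⟩, hGt (f ⟨x, hx⟩), hGt ⟨x, hx⟩, hFit (g ⟨x, hx⟩)]
    exact congrArg Subtype.val (l1 ⟨x, hx⟩)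
  have rel3 : ∀ y ∈ S, G (Fi y) = F (G y) := by
    intro y hy
    have h1 := rel1 (Fi y) (hFim hy)
    rw [hFiF y hy] at h1
    have h2 := congrArg F h1
    rw [hFiF _ (hGm (hFim hy))] at h2
    exact h2.symm
  have rel4 : ∀ y ∈ S, F (Gi y) = Gi (Fi y) := by
    intro y hy
    have h1 := rel1 (Gi y) (hGim hy)
    rw [hGGi y hy] at h1
    have h2 := congrArg Gi h1
    rwa [hGiG _ (hFm (hGim hy))] at h2
  have rel2 : ∀ z ∈ S, Gi (F z) = Fi (Gi z) := by
    intro z hz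
    have h1 := rel4 (F z) (hFm hz)
    rw [hFFi z hz] at h1
    have h2 := congrArg Fi h1
    rwa [hFFi _ (hGim (hFm hz))] at h2
  -- commutation with G², pointwise
  have hcommFG : ∀ x ∈ S, G (G (F x)) = F (G (G x)) := by
    intro x hx
    rw [rel1 x hx, rel3 _ (hGm hx)]
  have hcommFGi : ∀ x ∈ S, Gi (Gi (F x)) = F (Gi (Gi x)) := by
    intro x hx
    rw [rel2 x hx, ← rel4 _ (hGim hx)]
  have hcommFiG : ∀ x ∈ S, G (G (Fi x)) = Fi (G (G x)) := by
    intro x hx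
    rw [rel3 x hx, rel1 _ (hGm hx)]
  have hcommFiGi : ∀ x ∈ S, Gi (Gi (Fi x)) = Fi (Gi (Gi x)) := by
    intro x hx
    rw [← rel4 x hx, rel2 _ (hGim hx)]
  -- transport of fixed points
  have hFfix_iff : ∀ x ∈ S, F x = x → Fi x = x := by
    intro x hx hfx
    rw [← hfx, hFFi x hx, hfx]
  have hFifix_iff : ∀ x ∈ S, Fi x = x → F x = x := by
    intro x hx hfx
    rw [← hfx, hFiF x hx, hfx]
  have htransFG : ∀ x ∈ S, F x = x → F (G x) = G x := by
    intro x hx hfx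
    rw [← rel3 x hx, hFfix_iff x hx hfx]
  have htransFGi : ∀ x ∈ S, F x = x → F (Gi x) = Gi x := by
    intro x hx hfx
    rw [rel4 x hx, hFfix_iff x hx hfx]
  have htransFiG : ∀ x ∈ S, Fi x = x → Fi (G x) = G x := by
    intro x hx hfx
    rw [← rel1 x hx, hFifix_iff x hx hfx]
  have htransFiGi : ∀ x ∈ S, Fi x = x → Fi (Gi x) = Gi x := by
    intro x hx hfx
    rw [← rel2 x hx, hFifix_iff x hx hfx]
  -- conjugation inequalities
  have hconjFG : ∀ x ∈ S, x < F x → F (G x) < G x :=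
    Kopell.conj_aux F Fi G hFm hFim hGm hFmono hGmono hFiF rel1
  have hconjFiG : ∀ x ∈ S, x < Fi x → Fi (G x) < G x :=
    Kopell.conj_aux Fi F G hFim hFm hGm hFimono hGmono hFFi rel3
  -- a non-fixed point
  have hnef : ∃ t : Icc (-1:ℝ) 1, f t ≠ t := by
    by_contra hall
    push_neg at hall
    exact hne (Equiv.ext fun t => by simp [hall t])
  obtain ⟨t, ht⟩ := hnef
  have hx0S : (t:ℝ) ∈ S := t.2
  have hFx0 : F t = ((f t : ℝ)) := hFt t
  have hne2 : F t ≠ (t:ℝ) := by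
    intro heq
    exact ht (Subtype.ext (by rw [← hFx0, heq]))
  have hinjF : InjOn F S := fun x hx y hy hxy => by
    rw [← hFFi x hx, ← hFFi y hy, hxy]
  have hx0m1 : (t:ℝ) ≠ -1 := by
    intro heq
    apply ht
    have : t = (⟨-1, Stmt.negOne_mem_I⟩ : Icc (-1:ℝ) 1) := Subtype.ext heq
    rw [this, hf_1]
  have hx01 : (t:ℝ) ≠ 1 := by
    intro heq
    apply ht
    have : t = (⟨1, Stmt.one_mem_I⟩ : Icc (-1:ℝ) 1) := Subtype.ext heq
    rw [this, hf1]
  have hx0Ioo : (t:ℝ) ∈ Ioo (-1:ℝ) 1 :=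
    ⟨lt_of_le_of_ne hx0S.1 (Ne.symm hx0m1), lt_of_le_of_ne hx0S.2 hx01⟩
  rcases hne2.lt_or_gt with hl | hr
  · -- F t < t : use Fi with the point y := F t
    set y : ℝ := F t with hydef
    have hyS : y ∈ S := hFm hx0S
    have hym1 : y ≠ -1 := by
      intro heq
      exact hx0m1 (hinjF hx0S hm1S (by rw [← hF1] at heq; exact heq))
    have hy1 : y ≠ 1 := by
      intro heq
      exact hx01 (hinjF hx0S h1S (by rw [← hF2] at heq; exact heq))
    have hyIoo : y ∈ Ioo (-1:ℝ) 1 :=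
      ⟨lt_of_le_of_ne hyS.1 (Ne.symm hym1), lt_of_le_of_ne hyS.2 hy1⟩
    have hylt : y < Fi y := by
      rw [hydef, hFFi _ hx0S]
      exact hl
    exact Kopell.key1 Fi G Gi hFiC hGC hGiC hFim hGm hGim hFimono hGmono hGimono
      hFipos hGpos hGipos hGGi hGiG hcommFiG hcommFiGi htransFiG htransFiGi
      hconjFiG hFi1 hFi2 y hyIoo hylt
  · exact Kopell.key1 F G Gi hFC hGC hGiC hFm hGm hGim hFmono hGmono hGimono
      hFpos hGpos hGipos hGGi hGiG hcommFG hcommFGi htransFG htransFGi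
      hconjFG hF1 hF2 t hx0Ioo hr
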